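/- Suppose s, c, d : ℝ → ℝ are differentiable with s' = c·d, c' = −s·d, d' = −k² s·c, s(0)=0, c(0)=1, d(0)=1, where k ∈ ℝ. Then for all t: s(t)² + c(t)² = 1 and k² s(t)² + d(t)² = 1. Moreover if k = 0 then s(t) = sin t, c(t) = cos t, d(t) = 1, and if k = 1 then s(t) = tanh t and c(t) = d(t) = sech t. -/

import Mathlib

lemma const_of_deriv_zero (f : ℝ → ℝ) (hf : ∀ t, HasDerivAt f 0 t) (t : ℝ) : f t = f 0 :=
  is_const_of_deriv_eq_zero (fun x => (hf x).differentiableAt) (fun x => (hf x).deriv) t 0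

lemma lin_ode_zero (g a : ℝ → ℝ) (ha : Continuous a)
    (hg : ∀ t, HasDerivAt g (a t * g t) t) (hg0 : g 0 = 0) : ∀ t, g t = 0 := by
  set A : ℝ → ℝ := fun t => ∫ x in (0:ℝ)..t, a x with hA
  have hA' : ∀ t, HasDerivAt A (a t) t := fun t => (ha.integral_hasStrictDerivAt 0 t).hasDerivAt
  have key : ∀ t, HasDerivAt (fun t => g t * Real.exp (-A t)) 0 t := by
    intro t
    have h1 : HasDerivAt (fun t => Real.exp (-A t)) (Real.exp (-A t) * (-a t)) t :=
      by have := (Real.hasDerivAt_exp (-A t)).comp t ((hA' t).neg); exact this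
    have := (hg t).mul h1
    refine this.congr_deriv (Eq.symm ?_)
    ring
  intro t
  have h2 := const_of_deriv_zero _ key t
  simp only [hg0, zero_mul] at h2
  have : Real.exp (-A t) ≠ 0 := Real.exp_ne_zero _
  exact (mul_eq_zero.1 h2).resolve_right this

theorem stmt14 (k : ℝ) (s c d : ℝ → ℝ)
    (hs : ∀ t, HasDerivAt s (c t * d t) t)
    (hc : ∀ t, HasDerivAt c (-(s t * d t)) t)
    (hd : ∀ t, HasDerivAt d (-(k ^ 2 * s t * c t)) t)
    (hs0 : s 0 = 0) (hc0 : c 0 = 1) (hd0 : d 0 = 1) :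
    (∀ t : ℝ, s t ^ 2 + c t ^ 2 = 1 ∧ k ^ 2 * s t ^ 2 + d t ^ 2 = 1) ∧
    (k = 0 → ∀ t : ℝ, s t = Real.sin t ∧ c t = Real.cos t ∧ d t = 1) ∧
    (k = 1 → ∀ t : ℝ, s t = Real.tanh t ∧ c t = 1 / Real.cosh t ∧ d t = 1 / Real.cosh t) := by
  -- invariants
  have inv1 : ∀ t, s t ^ 2 + c t ^ 2 = 1 := by
    intro t
    have h : ∀ u, HasDerivAt (fun u => s u ^ 2 + c u ^ 2) 0 u := by
      intro u
      have := ((hs u).pow 2).add ((hc u).pow 2)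
      refine this.congr_deriv (Eq.symm ?_); ring
    have := const_of_deriv_zero _ h t
    simpa [hs0, hc0] using this
  have inv2 : ∀ t, k ^ 2 * s t ^ 2 + d t ^ 2 = 1 := by
    intro t
    have h : ∀ u, HasDerivAt (fun u => k ^ 2 * s u ^ 2 + d u ^ 2) 0 u := by
      intro u
      have := (((hs u).pow 2).const_mul (k ^ 2)).add ((hd u).pow 2)
      refine this.congr_deriv (Eq.symm ?_); ring
    have := const_of_deriv_zero _ h t
    simpa [hs0, hd0] using this
  refine ⟨fun t => ⟨inv1 t, inv2 t⟩, ?_, ?_⟩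
  · -- k = 0
    intro hk
    have hd1 : ∀ t, d t = 1 := by
      intro t
      have h : ∀ u, HasDerivAt d 0 u := by
        intro u; simpa [hk] using hd u
      have := const_of_deriv_zero _ h t
      rwa [hd0] at this
    have hs' : ∀ t, HasDerivAt s (c t) t := by
      intro t; simpa [hd1 t] using hs t
    have hc' : ∀ t, HasDerivAt c (-(s t)) t := by
      intro t; simpa [hd1 t] using hc t
    have hP : ∀ t, s t * Real.sin t + c t * Real.cos t = 1 := by
      intro t
      have h : ∀ u, HasDerivAt (fun u => s u * Real.sin u + c u * Real.cos u) 0 u := by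
        intro u
        have := ((hs' u).mul (Real.hasDerivAt_sin u)).add ((hc' u).mul (Real.hasDerivAt_cos u))
        refine this.congr_deriv (Eq.symm ?_); ring
      have := const_of_deriv_zero _ h t
      simpa [hs0, hc0] using this
    have hQ : ∀ t, s t * Real.cos t - c t * Real.sin t = 0 := by
      intro t
      have h : ∀ u, HasDerivAt (fun u => s u * Real.cos u - c u * Real.sin u) 0 u := by
        intro u
        have := ((hs' u).mul (Real.hasDerivAt_cos u)).sub ((hc' u).mul (Real.hasDerivAt_sin u))
        refine this.congr_deriv (Eq.symm ?_); ring
      have := const_of_deriv_zero _ h t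
      simpa [hs0, hc0] using this
    intro t
    have hsc := Real.sin_sq_add_cos_sq t
    refine ⟨?_, ?_, hd1 t⟩
    · linear_combination Real.sin t * hP t + Real.cos t * hQ t - s t * hsc
    · linear_combination Real.cos t * hP t - Real.sin t * hQ t - c t * hsc
  · -- k = 1
    intro hk
    have hconts : Continuous s := Differentiable.continuous (fun t => (hs t).differentiableAt)
    -- c = d
    have hcd : ∀ t, c t = d t := by
      have h0 : ∀ t, c t - d t = 0 := by
        apply lin_ode_zero (fun t => c t - d t) s hconts
        · intro t
          have := (hc t).sub (hd t)
          refine this.congr_deriv (Eq.symm ?_)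
          rw [hk]; ring
        · simp [hc0, hd0]
      intro t; linarith [h0 t]
    have htanh : ∀ t : ℝ, HasDerivAt Real.tanh (1 - Real.tanh t ^ 2) t := by
      intro t
      have h := (Real.hasDerivAt_sinh t).div (Real.hasDerivAt_cosh t) (Real.cosh_pos t).ne'
      have heq : (fun x => Real.sinh x / Real.cosh x) = Real.tanh := by
        funext x; rw [Real.tanh_eq_sinh_div_cosh]
      rw [show Real.sinh / Real.cosh = Real.tanh from heq] at h
      refine h.congr_deriv (Eq.symm ?_)
      have hc2 := Real.cosh_sq t
      have hcn : Real.cosh t ≠ 0 := (Real.cosh_pos t).ne'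
      rw [Real.tanh_eq_sinh_div_cosh]
      field_simp
    have hst : ∀ t, s t = Real.tanh t := by
      have h0 : ∀ t, s t - Real.tanh t = 0 := by
        apply lin_ode_zero (fun t => s t - Real.tanh t) (fun t => -(s t + Real.tanh t))
          ((hconts.add (Differentiable.continuous fun x => (htanh x).differentiableAt)).neg)
        · intro t
          have h := (hs t).sub (htanh t)
          have h2 := inv2 t
          rw [hk] at h2
          have hce : c t = d t := hcd t
          have : c t * d t - (1 - Real.tanh t ^ 2) =
              -(s t + Real.tanh t) * (s t - Real.tanh t) := by
            linear_combination d t * hce + h2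
          rw [this] at h
          exact h
        · simp [hs0, Real.tanh_zero]
      intro t; linarith [h0 t]
    have hdt : ∀ t, d t * Real.cosh t = 1 := by
      intro t
      have h : ∀ u, HasDerivAt (fun u => d u * Real.cosh u) 0 u := by
        intro u
        have := (hd u).mul (Real.hasDerivAt_cosh u)
        refine this.congr_deriv (Eq.symm ?_)
        have := hst u
        have hcu := hcd u
        have hsinh : Real.tanh u * Real.cosh u = Real.sinh u := by
          rw [Real.tanh_eq_sinh_div_cosh]
          field_simp
        rw [hk, this, hcu]
        linear_combination d u * hsinh
      have := const_of_deriv_zero _ h t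
      simpa [hd0, Real.cosh_zero] using this
    intro t
    have hcosh : Real.cosh t ≠ 0 := (Real.cosh_pos t).ne'
    have hdv : d t = 1 / Real.cosh t := by
      field_simp
      exact hdt t
    exact ⟨hst t, by rw [hcd t]; exact hdv, hdv⟩
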